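/- If X and Y are metric spaces that are γ_k-sets, then X × Y is a γ_k-set. -/

import Mathlib

/-- A `k`-cover: a family of open sets such that every compact set is contained in a member. -/
def IsKCover {Z : Type*} [TopologicalSpace Z] (𝒰 : Set (Set Z)) : Prop :=
  (∀ U ∈ 𝒰, IsOpen U) ∧ ∀ C : Set Z, IsCompact C → ∃ U ∈ 𝒰, C ⊆ U

/-- `Z` is a `γ_k`-set: every `k`-cover admits a sequence `(U_n)` such that every
compact set is contained in all but finitely many `U_n`. -/
def IsGammaKSet (Z : Type*) [TopologicalSpace Z] : Prop :=
  ∀ 𝒰 : Set (Set Z), IsKCover 𝒰 →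
    ∃ U : ℕ → Set Z, (∀ n, U n ∈ 𝒰) ∧
      ∀ C : Set Z, IsCompact C → ∀ᶠ n in Filter.atTop, C ⊆ U n

open Filter Metric Set Topology

/-- A noncompact closed set in a metric space contains a sequence with no convergent
subsequence (converging anywhere in the space). -/
lemma aux_noSubseq {Z : Type*} [MetricSpace Z] {s : Set Z} (hs : IsClosed s)
    (hnc : ¬ IsCompact s) :
    ∃ u : ℕ → Z, (∀ n, u n ∈ s) ∧
      ∀ (a : Z) (φ : ℕ → ℕ), StrictMono φ → ¬ Tendsto (u ∘ φ) atTop (nhds a) := by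
  have h2 : ¬ IsSeqCompact s := fun h => hnc h.isCompact
  rw [IsSeqCompact] at h2
  push_neg at h2
  obtain ⟨u, hu, hbad⟩ := h2
  refine ⟨u, hu, fun a φ hφ ht => ?_⟩
  have ha : a ∈ s := by
    refine hs.mem_of_tendsto ht (Eventually.of_forall fun n => hu (φ n))
  exact hbad a ha φ hφ ht

/-- If a sequence has no convergent subsequence, then for any nonempty compact set `C`,
only finitely many terms are `δ`-close to `C`, for some `δ > 0`. -/
lemma aux_delta {Z : Type*} [MetricSpace Z] {u : ℕ → Z}
    (hu : ∀ (a : Z) (φ : ℕ → ℕ), StrictMono φ → ¬ Tendsto (u ∘ φ) atTop (nhds a))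
    {C : Set Z} (hC : IsCompact C) (hne : C.Nonempty) :
    ∃ δ > 0, {n : ℕ | Metric.infDist (u n) C < δ}.Finite := by
  by_contra h
  push_neg at h
  have hinf : ∀ i : ℕ, {n : ℕ | Metric.infDist (u n) C < 1 / (i + 1)}.Infinite := by
    intro i
    have : (0:ℝ) < 1 / (i + 1) := by positivity
    exact fun hfin => (h _ this hfin).elim
  have key : ∀ (i N : ℕ), ∃ n, N < n ∧ Metric.infDist (u n) C < 1 / (i + 1) := by
    intro i N
    obtain ⟨b, hb, hbN⟩ := (hinf i).exists_gt N
    exact ⟨b, hbN, hb⟩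
  choose g hg1 hg2 using key
  let φ : ℕ → ℕ := fun i => Nat.rec (g 0 0) (fun j prev => g (j + 1) prev) i
  have hφmono : StrictMono φ := by
    apply strictMono_nat_of_lt_succ
    intro n
    exact hg1 (n + 1) (φ n)
  have hφd : ∀ i, Metric.infDist (u (φ i)) C < 1 / (i + 1) := by
    intro i
    cases i with
    | zero => exact hg2 0 0
    | succ j => exact hg2 (j + 1) (φ j)
  have hex : ∀ i, ∃ y ∈ C, dist (u (φ i)) y < 1 / (i + 1) := by
    intro i
    exact (Metric.infDist_lt_iff hne).mp (hφd i)
  choose c hc1 hc2 using hex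
  obtain ⟨a, _, ψ, hψ, hten⟩ := hC.tendsto_subseq hc1
  apply hu a (φ ∘ ψ) (hφmono.comp hψ)
  rw [tendsto_iff_dist_tendsto_zero]
  have hbound : ∀ i, dist ((u ∘ (φ ∘ ψ)) i) a ≤ 1 / (i + 1) + dist (c (ψ i)) a := by
    intro i
    calc dist (u (φ (ψ i))) a ≤ dist (u (φ (ψ i))) (c (ψ i)) + dist (c (ψ i)) a :=
          dist_triangle _ _ _
      _ ≤ 1 / (ψ i + 1) + dist (c (ψ i)) a := by
          have := hc2 (ψ i); linarith
      _ ≤ 1 / (i + 1) + dist (c (ψ i)) a := by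
          have hle : i ≤ ψ i := hψ.le_apply
          have h1 : (i : ℝ) + 1 ≤ (ψ i : ℝ) + 1 := by exact_mod_cast Nat.succ_le_succ hle
          have h2 : (0:ℝ) < (i:ℝ) + 1 := by positivity
          have := one_div_le_one_div_of_le h2 h1
          linarith
  have hlim : Tendsto (fun i : ℕ => 1 / ((i:ℝ) + 1) + dist (c (ψ i)) a) atTop (nhds 0) := by
    have h1 : Tendsto (fun n : ℕ => 1 / ((n : ℝ) + 1)) atTop (nhds 0) := tendsto_one_div_add_atTop_nhds_zero_nat
    have h2 : Tendsto (fun i : ℕ => dist (c (ψ i)) a) atTop (nhds 0) := by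
      have := tendsto_iff_dist_tendsto_zero.mp hten
      exact this
    simpa using h1.add h2
  exact squeeze_zero (fun _ => dist_nonneg) hbound hlim

/-- In a metric `γ_k`-space, every point has a compact closed ball. -/
lemma aux_ball {X : Type*} [MetricSpace X] (hX : IsGammaKSet X) (x : X) :
    ∃ r : ℝ, 0 < r ∧ IsCompact (Metric.closedBall x r) := by
  by_contra h
  push_neg at h
  have hseq : ∀ k : ℕ, ∃ u : ℕ → X, (∀ n, u n ∈ Metric.closedBall x (1 / (k + 1))) ∧
      ∀ (a : X) (φ : ℕ → ℕ), StrictMono φ → ¬ Tendsto (u ∘ φ) atTop (nhds a) := by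
    intro k
    have hpos : (0:ℝ) < 1 / (k + 1) := by positivity
    exact aux_noSubseq Metric.isClosed_closedBall (h _ hpos)
  choose u hu1 hu2 using hseq
  set 𝒰 : Set (Set X) := {U : Set X | IsOpen U ∧ ∃ M : ℕ, 0 < M ∧
    (∀ k < M, {n : ℕ | u k n ∈ U}.Finite) ∧ (∀ n : ℕ, u 0 n ∈ U → n < M)} with h𝒰
  have hkc : IsKCover 𝒰 := by
    constructor
    · intro U hU; exact hU.1
    · intro C hC
      rcases C.eq_empty_or_nonempty with rfl | hne
      · refine ⟨∅, ⟨isOpen_empty, 1, one_pos, ?_, ?_⟩, empty_subset _⟩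
        · intro k _; simp
        · intro n hn; simp at hn
      · have hδ : ∀ k : ℕ, ∃ δ > 0, {n : ℕ | Metric.infDist (u k n) C < δ}.Finite :=
          fun k => aux_delta (hu2 k) hC hne
        choose δ hδpos hδfin using hδ
        obtain ⟨B, hB⟩ := (hδfin 0).bddAbove
        set M : ℕ := B + 1 with hM
        have hMpos : 0 < M := Nat.succ_pos B
        set δ' : ℝ := (Finset.range M).inf' (by simp [hM]) δ with hδ'
        have hδ'pos : 0 < δ' := by
          rw [hδ']
          rw [Finset.lt_inf'_iff]
          intro k _; exact hδpos k
        have hδ'le : ∀ k < M, δ' ≤ δ k := by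
          intro k hk
          exact Finset.inf'_le _ (Finset.mem_range.mpr hk)
        refine ⟨{z : X | Metric.infDist z C < δ'}, ⟨?_, M, hMpos, ?_, ?_⟩, ?_⟩
        · exact isOpen_lt (Metric.continuous_infDist_pt C) continuous_const
        · intro k hk
          refine (hδfin k).subset ?_
          intro n hn
          simp only [mem_setOf_eq] at hn ⊢
          exact lt_of_lt_of_le hn (hδ'le k hk)
        · intro n hn
          simp only [mem_setOf_eq] at hn
          have : n ∈ {m : ℕ | Metric.infDist (u 0 m) C < δ 0} :=
            lt_of_lt_of_le hn (hδ'le 0 hMpos)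
          have := hB this
          omega
        · intro c hc
          simp only [mem_setOf_eq]
          rw [Metric.infDist_zero_of_mem hc]
          exact hδ'pos
  obtain ⟨V, hV𝒰, hVabs⟩ := hX 𝒰 hkc
  choose M hM1 hMfin hMload using fun j => (hV𝒰 j).2
  have hMgrow : ∀ B : ℕ, ∀ᶠ j in atTop, B < M j := by
    intro B
    filter_upwards [hVabs {u 0 B} isCompact_singleton] with j hj
    exact hMload j B (hj rfl)
  have hNk : ∀ k : ℕ, ∃ N, ∀ j ≥ N, k < M j := fun k => eventually_atTop.mp (hMgrow k)
  choose N hN using hNk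
  set J : ℕ → ℕ := fun k => max (N k) k with hJ
  have hkM : ∀ k, k < M (J k) := fun k => hN k _ (le_max_left _ _)
  have hpick : ∀ k, ∃ n, u k n ∉ V (J k) := by
    intro k
    by_contra hcon
    push_neg at hcon
    have : {n : ℕ | u k n ∈ V (J k)} = univ := eq_univ_of_forall hcon
    have hfin := hMfin (J k) k (hkM k)
    rw [this] at hfin
    exact Set.infinite_univ hfin
  choose nn hnn using hpick
  set q : ℕ → X := fun k => u k (nn k) with hq
  have hqd : ∀ k, dist (q k) x ≤ 1 / (k + 1) := fun k => hu1 k (nn k)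
  have hqt : Tendsto q atTop (nhds x) :=
    tendsto_iff_dist_tendsto_zero.mpr
      (squeeze_zero (fun _ => dist_nonneg) hqd tendsto_one_div_add_atTop_nhds_zero_nat)
  have hCstar : IsCompact (insert x (Set.range q)) := hqt.isCompact_insert_range
  obtain ⟨Nstar, hNstar⟩ := eventually_atTop.mp (hVabs _ hCstar)
  have h1 : insert x (Set.range q) ⊆ V (J Nstar) := hNstar _ (le_max_right _ _)
  exact hnn Nstar (h1 (Or.inr ⟨Nstar, rfl⟩))

/-- In a metric `γ_k`-space there is a sequence of open sets with compact closures
eventually absorbing every compact set. -/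
lemma aux_cofinal {X : Type*} [MetricSpace X] (hX : IsGammaKSet X) :
    ∃ V : ℕ → Set X, (∀ j, IsCompact (closure (V j))) ∧
      ∀ C : Set X, IsCompact C → ∀ᶠ j in atTop, C ⊆ V j := by
  have hloc := fun z => aux_ball hX z
  choose r hr hrc using hloc
  set 𝒰 : Set (Set X) := {U : Set X | IsOpen U ∧ IsCompact (closure U)} with h𝒰
  have hkc : IsKCover 𝒰 := by
    constructor
    · intro U hU; exact hU.1
    · intro C hC
      obtain ⟨t, _, hcov⟩ := hC.elim_nhds_subcover (fun c => Metric.ball c (r c))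
        (fun c _ => Metric.ball_mem_nhds c (hr c))
      refine ⟨⋃ c ∈ t, Metric.ball c (r c), ⟨?_, ?_⟩, hcov⟩
      · exact isOpen_biUnion fun c _ => Metric.isOpen_ball
      · have hK : IsCompact (⋃ c ∈ t, Metric.closedBall c (r c)) :=
          t.finite_toSet.isCompact_biUnion fun c _ => hrc c
        refine hK.of_isClosed_subset isClosed_closure ?_
        refine closure_minimal ?_ hK.isClosed
        exact Set.iUnion₂_mono fun c _ => Metric.ball_subset_closedBall
  obtain ⟨V, hV, habs⟩ := hX 𝒰 hkc
  exact ⟨V, fun j => (hV j).2, habs⟩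

theorem stmt7 {X Y : Type*} [MetricSpace X] [MetricSpace Y]
    (hX : IsGammaKSet X) (hY : IsGammaKSet Y) :
    IsGammaKSet (X × Y) := by
  obtain ⟨VX, hVXc, habsX⟩ := aux_cofinal hX
  obtain ⟨VY, hVYc, habsY⟩ := aux_cofinal hY
  intro 𝒲 h𝒲
  have hWex : ∀ j : ℕ, ∃ W ∈ 𝒲, (closure (VX j)) ×ˢ (closure (VY j)) ⊆ W :=
    fun j => h𝒲.2 _ ((hVXc j).prod (hVYc j))
  choose W hW1 hW2 using hWex
  refine ⟨W, hW1, ?_⟩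
  intro C hC
  have hA := habsX _ (hC.image continuous_fst)
  have hB := habsY _ (hC.image continuous_snd)
  filter_upwards [hA, hB] with j hja hjb
  intro z hz
  refine hW2 j ?_
  constructor
  · exact subset_closure (hja ⟨z, hz, rfl⟩)
  · exact subset_closure (hjb ⟨z, hz, rfl⟩)
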